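/- Let G and H be real Hilbert spaces and L, C : G → H bounded linear operators such that C is compact and L − λ̂C is invertible for some λ̂ ∈ ℝ. Then the set of eigenvalues {λ ∈ ℝ : Ker(L − λC) ≠ {0}} is a closed and discrete subset of ℝ (it has no accumulation point in ℝ). -/

import Mathlib

open Filter

open scoped RealInnerProductSpace

/-- Auxiliary: a compact operator cannot have an injective sequence of eigenvalues
bounded away from zero. -/
lemma no_eigen_seq {G : Type*} [NormedAddCommGroup G] [InnerProductSpace ℝ G]
    (T : G →L[ℝ] G) (hT : IsCompactOperator ⇑T)
    (κ : ℕ → ℝ) (hinj : Function.Injective κ) {δ : ℝ} (hδ : 0 < δ)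
    (hbound : ∀ n, δ ≤ |κ n|)
    (x : ℕ → G) (hx0 : ∀ n, x n ≠ 0) (heig : ∀ n, T (x n) = κ n • x n) : False := by
  classical
  have hκ0 : ∀ n, κ n ≠ 0 := fun n => abs_pos.1 (lt_of_lt_of_le hδ (hbound n))
  have li : LinearIndependent ℝ x := by
    refine Module.End.eigenvectors_linearIndependent' (T : G →ₗ[ℝ] G) κ hinj x
      (fun n => Module.End.hasEigenvector_iff.2 ⟨?_, hx0 n⟩)
    rw [Module.End.mem_eigenspace_iff]
    simpa using heig n
  set E : ℕ → Submodule ℝ G := fun n => Submodule.span ℝ (x '' Set.Iio n) with hE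
  have hxE : ∀ n, x n ∉ E n := fun n =>
    li.notMem_span_image (by simp : ¬ (n : ℕ) ∈ Set.Iio n)
  have hmono : Monotone E := fun a b hab =>
    Submodule.span_mono (Set.image_mono fun i hi => lt_of_lt_of_le hi hab)
  have hxmem : ∀ n, x n ∈ E (n + 1) :=
    fun n => Submodule.subset_span ⟨n, by simp, rfl⟩
  -- invariance of the spans
  have hTE : ∀ n, ∀ w ∈ E n, T w ∈ E n := by
    intro n
    have h : Submodule.map (T : G →ₗ[ℝ] G) (E n) ≤ E n := by
      rw [hE, Submodule.map_span_le]
      rintro _ ⟨i, hi, rfl⟩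
      have : (T : G →ₗ[ℝ] G) (x i) = κ i • x i := by simpa using heig i
      rw [this]
      exact Submodule.smul_mem _ _ (Submodule.subset_span ⟨i, hi, rfl⟩)
    exact fun w hw => h (Submodule.mem_map_of_mem hw)
  have hsub : ∀ n, ∀ w ∈ E (n + 1), T w - κ n • w ∈ E n := by
    intro n
    have h : Submodule.map ((T : G →ₗ[ℝ] G) - κ n • (LinearMap.id : G →ₗ[ℝ] G)) (E (n + 1)) ≤ E n := by
      rw [hE, Submodule.map_span_le]
      rintro _ ⟨i, hi, rfl⟩
      have hv : ((T : G →ₗ[ℝ] G) - κ n • (LinearMap.id : G →ₗ[ℝ] G)) (x i) = (κ i - κ n) • x i := by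
        simp only [LinearMap.sub_apply, LinearMap.smul_apply, LinearMap.id_apply]
        rw [sub_smul]
        congr 1
        simpa using heig i
      rw [hv]
      rcases lt_or_eq_of_le (Nat.lt_succ_iff.mp hi) with h' | h'
      · exact Submodule.smul_mem _ _ (Submodule.subset_span ⟨i, h', rfl⟩)
      · simp [h']
    intro w hw
    have := h (Submodule.mem_map_of_mem hw)
    simpa using this
  -- construct almost-orthonormal sequence
  have hy : ∀ n, ∃ y : G, ‖y‖ = 1 ∧ y ∈ E (n + 1) ∧ ∀ z ∈ E n, ⟪y, z⟫ = 0 := by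
    intro n
    haveI : FiniteDimensional ℝ (E n) :=
      FiniteDimensional.span_of_finite ℝ ((Set.finite_Iio n).image x)
    set d := x n - ((E n).orthogonalProjection (x n) : G) with hd
    have hd0 : d ≠ 0 := by
      intro h
      apply hxE n
      have : x n = ((E n).orthogonalProjection (x n) : G) := by
        rw [hd, sub_eq_zero] at h; exact h
      rw [this]
      exact ((E n).orthogonalProjection (x n)).2
    refine ⟨‖d‖⁻¹ • d, ?_, ?_, ?_⟩
    · rw [norm_smul, norm_inv, norm_norm, inv_mul_cancel₀ (norm_ne_zero_iff.2 hd0)]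
    · exact Submodule.smul_mem _ _ (Submodule.sub_mem _ (hxmem n)
        (hmono (Nat.le_succ n) ((E n).orthogonalProjection (x n)).2))
    · intro z hz
      rw [real_inner_smul_left, hd, (show ⟪x n - ((E n).orthogonalProjection (x n) : G), z⟫ = 0 from
        Submodule.starProjection_inner_eq_zero (x n) z hz), mul_zero]
  choose y hy1 hy2 hy3 using hy
  set s : ℕ → G := fun n => (κ n)⁻¹ • T (y n) with hs
  -- separation
  have hsep : ∀ m n, m < n → 1 ≤ ‖s n - s m‖ := by
    intro m n hmn
    have key : ∀ z ∈ E n, 1 ≤ ‖y n - z‖ := by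
      intro z hz
      have h2 : ‖y n - z‖ ^ 2 = 1 + ‖z‖ ^ 2 := by
        rw [norm_sub_sq_real, hy3 n z hz, hy1 n]; ring
      nlinarith [norm_nonneg (y n - z), norm_nonneg z, sq_nonneg ‖z‖]
    have hzmem : s m - (κ n)⁻¹ • (T (y n) - κ n • y n) ∈ E n := by
      refine Submodule.sub_mem _ ?_ ?_
      · rw [hs]
        exact hmono (Nat.succ_le_of_lt hmn)
          (Submodule.smul_mem _ _ (hTE (m + 1) _ (hy2 m)))
      · exact Submodule.smul_mem _ _ (hsub n _ (hy2 n))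
    have hrw : s n - s m = y n - (s m - (κ n)⁻¹ • (T (y n) - κ n • y n)) := by
      simp only [hs, smul_sub, inv_smul_smul₀ (hκ0 n)]
      abel
    rw [hrw]
    exact key _ hzmem
  -- compactness contradiction
  obtain ⟨K, hK, hKsub⟩ :=
    IsCompactOperator.image_closedBall_subset_compact (f := (T : G →ₗ[ℝ] G)) hT δ⁻¹
  have hsK : ∀ n, s n ∈ K := by
    intro n
    have h1 : (κ n)⁻¹ • y n ∈ Metric.closedBall (0 : G) δ⁻¹ := by
      rw [Metric.mem_closedBall, dist_zero_right, norm_smul, hy1 n, mul_one, norm_inv,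
        Real.norm_eq_abs]
      exact inv_anti₀ hδ (hbound n)
    have h2 : (T : G →ₗ[ℝ] G) ((κ n)⁻¹ • y n) = s n := by
      simp only [hs, map_smul]
      rfl
    exact h2 ▸ hKsub ⟨_, h1, rfl⟩
  obtain ⟨a, _, φ, hφ, hconv⟩ := hK.tendsto_subseq hsK
  rw [Metric.tendsto_atTop] at hconv
  obtain ⟨N, hN⟩ := hconv 2⁻¹ (by norm_num)
  have h1 := hN N le_rfl
  have h2 := hN (N + 1) (Nat.le_succ N)
  have h3 := hsep (φ N) (φ (N + 1)) (hφ (Nat.lt_succ_self N))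
  have h4 : dist (s (φ (N + 1))) (s (φ N)) < 1 := by
    calc dist (s (φ (N + 1))) (s (φ N)) ≤ dist (s (φ (N + 1))) a + dist (s (φ N)) a :=
          dist_triangle_right _ _ _
      _ < 1 := by
          simp only [Function.comp_apply] at h1 h2
          linarith
  rw [dist_eq_norm] at h4
  linarith

theorem eigenvalues_closed_and_discrete
    (G H : Type*) [NormedAddCommGroup G] [InnerProductSpace ℝ G] [CompleteSpace G]
    [NormedAddCommGroup H] [InnerProductSpace ℝ H] [CompleteSpace H]
    (L C : G →L[ℝ] H)
    (hC : IsCompactOperator ⇑C)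
    (hinv : ∃ lamHat : ℝ, ∃ e : G ≃L[ℝ] H, ∀ x, e x = L x - lamHat • C x) :
    IsClosed {lam : ℝ | LinearMap.ker ((L - lam • C : G →L[ℝ] H) : G →ₗ[ℝ] H) ≠ ⊥} ∧
      ∀ lam : ℝ, ¬ AccPt lam (𝓟 {lam : ℝ | LinearMap.ker ((L - lam • C : G →L[ℝ] H) : G →ₗ[ℝ] H) ≠ ⊥}) := by
  classical
  obtain ⟨lamHat, e, he⟩ := hinv
  set T : G →L[ℝ] G := (e.symm : H →L[ℝ] G).comp C with hTdef
  have hTx : ∀ x : G, T x = e.symm (C x) := fun x => rfl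
  have hTc : IsCompactOperator ⇑T := hC.clm_comp (e.symm : H →L[ℝ] G)
  set S := {lam : ℝ | LinearMap.ker ((L - lam • C : G →L[ℝ] H) : G →ₗ[ℝ] H) ≠ ⊥} with hSdef
  have hker : ∀ (lam : ℝ) (x : G),
      x ∈ LinearMap.ker ((L - lam • C : G →L[ℝ] H) : G →ₗ[ℝ] H) ↔ x = (lam - lamHat) • T x := by
    intro lam x
    rw [LinearMap.mem_ker, ContinuousLinearMap.coe_coe]
    have h0 : (L - lam • C) x = L x - lam • C x := by simp
    rw [h0]
    constructor
    · intro h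
      have h1 : e x = (lam - lamHat) • C x := by
        rw [he x, sub_smul]
        have hL : L x = lam • C x := by rwa [sub_eq_zero] at h
        rw [hL]
      have h2 : x = (lam - lamHat) • e.symm (C x) := by
        have := congrArg e.symm h1
        rwa [e.symm_apply_apply, map_smul] at this
      rw [hTx]
      exact h2
    · intro h
      have h1 : e x = (lam - lamHat) • C x := by
        conv_lhs => rw [h]
        rw [map_smul, hTx, e.apply_symm_apply]
      have h2 := he x
      rw [h1, sub_smul] at h2
      have h3 : lam • C x = L x := by
        have := congrArg (· + lamHat • C x) h2
        simpa using this
      rw [← h3]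
      exact sub_self _
  have hmemS : ∀ lam : ℝ, lam ∈ S ↔ ∃ x : G, x ≠ 0 ∧ x = (lam - lamHat) • T x := by
    intro lam
    rw [hSdef, Set.mem_setOf_eq, Submodule.ne_bot_iff]
    constructor
    · rintro ⟨x, hx, hx0⟩
      exact ⟨x, hx0, (hker lam x).1 hx⟩
    · rintro ⟨x, hx0, hx⟩
      exact ⟨x, (hker lam x).2 hx, hx0⟩
  have hnot : lamHat ∉ S := by
    rw [hmemS]
    rintro ⟨x, hx0, hx⟩
    apply hx0
    rw [hx, sub_self, zero_smul]
  have hacc : ∀ lam : ℝ, ¬ AccPt lam (𝓟 S) := by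
    intro lam hA
    have key : ∀ ε : ℝ, 0 < ε → ∃ μ : ℝ, μ ∈ S ∧ μ ≠ lam ∧ |μ - lam| < ε := by
      intro ε hε
      obtain ⟨z, hz, hzne⟩ :=
        accPt_iff_nhds.1 hA (Metric.ball lam ε) (Metric.ball_mem_nhds _ hε)
      refine ⟨z, hz.2, hzne, ?_⟩
      have := hz.1
      rwa [Metric.mem_ball, Real.dist_eq] at this
    choose F hFS hFne hFlt using key
    let g : ℕ → ℝ := fun n =>
      Nat.rec (F 1 one_pos)
        (fun _ prev => if h : 0 < |prev - lam| then F _ h else 0) n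
    have hg : ∀ n, g n ∈ S ∧ g n ≠ lam := by
      intro n
      induction n with
      | zero => exact ⟨hFS 1 one_pos, hFne 1 one_pos⟩
      | succ k ih =>
        have hpos : 0 < |g k - lam| := abs_pos.2 (sub_ne_zero.2 ih.2)
        have hrec : g (k + 1) = if h : 0 < |g k - lam| then F _ h else 0 := rfl
        rw [hrec, dif_pos hpos]
        exact ⟨hFS _ hpos, hFne _ hpos⟩
    have hdec : ∀ n, |g (n + 1) - lam| < |g n - lam| := by
      intro n
      have hpos : 0 < |g n - lam| := abs_pos.2 (sub_ne_zero.2 (hg n).2)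
      have hrec : g (n + 1) = if h : 0 < |g n - lam| then F _ h else 0 := rfl
      rw [hrec, dif_pos hpos]
      exact hFlt _ hpos
    have hstrict : StrictAnti (fun n => |g n - lam|) := strictAnti_nat_of_succ_lt hdec
    have hginj : Function.Injective g := fun a b hab => hstrict.injective (by rw [hab])
    have hlt1 : ∀ n, |g n - lam| < 1 := by
      intro n
      have h0 : |g 0 - lam| < 1 := hFlt 1 one_pos
      exact lt_of_le_of_lt (hstrict.antitone (Nat.zero_le n)) h0
    have hmu0 : ∀ n, g n - lamHat ≠ 0 := by
      intro n h
      apply hnot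
      have hgn : g n = lamHat := by linarith [sub_eq_zero.1 h]
      exact hgn ▸ (hg n).1
    have hex : ∀ n, ∃ x : G, x ≠ 0 ∧ x = (g n - lamHat) • T x :=
      fun n => (hmemS (g n)).1 (hg n).1
    choose x hx0 hx using hex
    set κ : ℕ → ℝ := fun n => (g n - lamHat)⁻¹ with hκ
    have heig : ∀ n, T (x n) = κ n • x n := by
      intro n
      have : κ n • x n = T (x n) := by
        conv_lhs => rw [hx n]
        rw [smul_smul]
        simp only [hκ]
        rw [inv_mul_cancel₀ (hmu0 n), one_smul]
      exact this.symm
    have hκinj : Function.Injective κ := by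
      intro a b hab
      apply hginj
      have h1 : (g a - lamHat)⁻¹ = (g b - lamHat)⁻¹ := hab
      have h2 : g a - lamHat = g b - lamHat := inv_inj.1 h1
      linarith
    have hMpos : (0:ℝ) < |lam - lamHat| + 1 := by positivity
    have hbd : ∀ n, (|lam - lamHat| + 1)⁻¹ ≤ |κ n| := by
      intro n
      have h1 : |g n - lamHat| ≤ |g n - lam| + |lam - lamHat| := abs_sub_le _ _ _
      have h2 : |g n - lamHat| ≤ |lam - lamHat| + 1 := by linarith [hlt1 n]
      have h3 : (0:ℝ) < |g n - lamHat| := abs_pos.2 (hmu0 n)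
      calc (|lam - lamHat| + 1)⁻¹ ≤ |g n - lamHat|⁻¹ := inv_anti₀ h3 h2
        _ = |κ n| := by simp only [hκ]; rw [abs_inv]
    exact no_eigen_seq T hTc κ hκinj (inv_pos.2 hMpos) hbd x hx0 heig
  refine ⟨?_, hacc⟩
  rw [isClosed_iff_clusterPt]
  intro a ha
  by_contra hna
  apply hacc a
  rw [accPt_principal_iff_clusterPt]
  rwa [Set.diff_singleton_eq_self hna]
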